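/- Suppose T : X → X̃ and S : Y → Ỹ are equivalent after extension. Then the range of T is closed if and only if the range of S is closed. -/

import Mathlib

lemma closed_range_prodMap_id {X X' X₀ : Type*} [NormedAddCommGroup X] [NormedSpace ℂ X]
    [NormedAddCommGroup X'] [NormedSpace ℂ X'] [NormedAddCommGroup X₀] [NormedSpace ℂ X₀]
    (T : X →L[ℂ] X') :
    IsClosed (Set.range (T.prodMap (ContinuousLinearMap.id ℂ X₀))) ↔
      IsClosed (Set.range T) := by
  have hr : Set.range (T.prodMap (ContinuousLinearMap.id ℂ X₀)) =
      Set.range T ×ˢ (Set.univ : Set X₀) := by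
    rw [ContinuousLinearMap.coe_prodMap', Set.range_prodMap]
    simp
  rw [hr]
  constructor
  · intro hc
    have : Set.range T = (fun x : X' => (x, (0 : X₀))) ⁻¹' (Set.range T ×ˢ Set.univ) := by
      ext x; simp
    rw [this]
    exact hc.preimage (continuous_id.prodMk continuous_const)
  · intro hc
    exact hc.prod isClosed_univ

/-- If `T` and `S` are equivalent after extension, then `T` has closed range iff `S`
has closed range. -/
theorem eae_closed_range_iff {X X' Y Y' X₀ Y₀ : Type*} [NormedAddCommGroup X] [NormedSpace ℂ X] [CompleteSpace X] [NormedAddCommGroup X'] [NormedSpace ℂ X'] [CompleteSpace X'] [NormedAddCommGroup Y] [NormedSpace ℂ Y] [CompleteSpace Y] [NormedAddCommGroup Y'] [NormedSpace ℂ Y'] [CompleteSpace Y'] [NormedAddCommGroup X₀] [NormedSpace ℂ X₀] [CompleteSpace X₀] [NormedAddCommGroup Y₀] [NormedSpace ℂ Y₀] [CompleteSpace Y₀]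
    (T : X →L[ℂ] X') (S : Y →L[ℂ] Y')
    (E : (Y' × Y₀) ≃L[ℂ] (X' × X₀)) (F : (X × X₀) ≃L[ℂ] (Y × Y₀))
    (h : T.prodMap (ContinuousLinearMap.id ℂ X₀) =
      (E : (Y' × Y₀) →L[ℂ] (X' × X₀)) ∘L
        (S.prodMap (ContinuousLinearMap.id ℂ Y₀)) ∘L (F : (X × X₀) →L[ℂ] (Y × Y₀))) :
    IsClosed (Set.range T) ↔ IsClosed (Set.range S) := by
  rw [← closed_range_prodMap_id (X₀ := X₀) T, ← closed_range_prodMap_id (X₀ := Y₀) S, h]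
  have hr : Set.range ((E : (Y' × Y₀) →L[ℂ] (X' × X₀)) ∘L
      (S.prodMap (ContinuousLinearMap.id ℂ Y₀)) ∘L (F : (X × X₀) →L[ℂ] (Y × Y₀))) =
      ⇑E '' Set.range (S.prodMap (ContinuousLinearMap.id ℂ Y₀)) := by
    ext p
    simp only [Set.mem_range, Set.mem_image, ContinuousLinearMap.comp_apply,
      ContinuousLinearEquiv.coe_coe]
    constructor
    · rintro ⟨x, rfl⟩
      exact ⟨_, ⟨F x, rfl⟩, rfl⟩
    · rintro ⟨q, ⟨y, rfl⟩, rfl⟩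
      exact ⟨F.symm y, by simp⟩
  rw [hr]
  exact E.toHomeomorph.isClosed_image
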